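/- Let g : ℝ → ℝ be continuously differentiable with g'(x) > 0 for all x, lim_{x→−∞} g(x) = 0, lim_{x→+∞} g(x) = 1, g(x) + g(−x) = 1 for all real x, and lim_{x→+∞} g'(x) = 0; let g⁻¹ : (0,1) → ℝ be the inverse of g. Then for every M > 0 there exists p₀ ∈ (0,1) such that for every p ∈ (p₀, 1) there exists q ∈ (0,1) for which the derivative of the map r ↦ g( g⁻¹(r) + g⁻¹(q) ) at r = p is strictly greater than M. -/

import Mathlib

open Filter Set

/-- Theorem 2.5: in a general pairwise preference model, for any `M > 0` the probability
`p_ij = g(g⁻¹(p_ik) + g⁻¹(p_kj))` is `M`-sensitive to `p_ik` whenever `p_ik` is close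
enough to `1`, for a suitable choice of `p_kj`. -/
theorem stmt_4 (g ginv : ℝ → ℝ)
    (hC1 : ContDiff ℝ 1 g) (hpos : ∀ x : ℝ, 0 < deriv g x)
    (hbot : Tendsto g atBot (nhds 0)) (htop : Tendsto g atTop (nhds 1))
    (hsymm : ∀ x : ℝ, g x + g (-x) = 1)
    (hderiv0 : Tendsto (deriv g) atTop (nhds 0))
    (hleft : ∀ x : ℝ, ginv (g x) = x)
    (hright : ∀ y ∈ Ioo (0 : ℝ) 1, g (ginv y) = y) :
    ∀ M > (0 : ℝ), ∃ p₀ ∈ Ioo (0 : ℝ) 1, ∀ p ∈ Ioo p₀ 1, ∃ q ∈ Ioo (0 : ℝ) 1,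
      deriv (fun r : ℝ => g (ginv r + ginv q)) p > M := by
  intro M hM
  have hdiff : Differentiable ℝ g := hC1.differentiable one_ne_zero
  have hmono : StrictMono g := strictMono_of_deriv_pos hpos
  have hmem : ∀ x : ℝ, g x ∈ Ioo (0 : ℝ) 1 := by
    intro x
    constructor
    · have h1 : (0 : ℝ) ≤ g (x - 1) := hmono.monotone.le_of_tendsto hbot (x - 1)
      have h2 : g (x - 1) < g x := hmono (by linarith)
      linarith
    · have h1 : g (x + 1) ≤ 1 := hmono.monotone.ge_of_tendsto htop (x + 1)
      have h2 : g x < g (x + 1) := hmono (by linarith)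
      linarith
  have hd0 : 0 < deriv g 0 := hpos 0
  -- choose x₀ with deriv g x < deriv g 0 / M for x ≥ x₀
  have hev : ∀ᶠ x in atTop, deriv g x < deriv g 0 / M := by
    have : Ioo (-(deriv g 0 / M)) (deriv g 0 / M) ∈ nhds (0 : ℝ) := by
      apply Ioo_mem_nhds <;> [linarith [div_pos hd0 hM]; exact div_pos hd0 hM]
    filter_upwards [hderiv0 this] with x hx using hx.2
  obtain ⟨x₀, hx₀⟩ := hev.exists_forall_of_atTop
  refine ⟨g x₀, hmem x₀, ?_⟩
  intro p hp
  have hpIoo : p ∈ Ioo (0 : ℝ) 1 := ⟨(hmem x₀).1.trans hp.1, hp.2⟩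
  set x := ginv p with hx
  have hgx : g x = p := hright p hpIoo
  have hxgt : x₀ < x := by
    have := hp.1; rw [← hgx] at this; exact hmono.lt_iff_lt.mp this
  have hdx : deriv g x < deriv g 0 / M := hx₀ x hxgt.le
  -- choose q = g (-x)
  refine ⟨g (-x), hmem (-x), ?_⟩
  have hq : ginv (g (-x)) = -x := hleft (-x)
  -- continuity of ginv at p
  have hginv_mono : StrictMonoOn ginv (Ioo (0:ℝ) 1) := by
    intro a ha b hb hab
    have : g (ginv a) < g (ginv b) := by rw [hright a ha, hright b hb]; exact hab
    exact hmono.lt_iff_lt.mp this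
  have himg : ginv '' Ioo (0:ℝ) 1 = univ := by
    apply eq_univ_of_forall
    intro y
    exact ⟨g y, hmem y, hleft y⟩
  have hcont : ContinuousAt ginv p := by
    apply hginv_mono.continuousAt_of_image_mem_nhds (s := Ioo (0:ℝ) 1)
      (IsOpen.mem_nhds isOpen_Ioo hpIoo)
    rw [himg]; exact univ_mem
  -- ginv has derivative (deriv g x)⁻¹ at p
  have hgx' : HasDerivAt g (deriv g x) (ginv p) := (hdiff x).hasDerivAt
  have hginv_deriv : HasDerivAt ginv (deriv g x)⁻¹ p := by
    apply HasDerivAt.of_local_left_inverse hcont hgx' (ne_of_gt (hpos x))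
    filter_upwards [IsOpen.mem_nhds isOpen_Ioo hpIoo] with y hy using hright y hy
  have hsum : HasDerivAt (fun r : ℝ => ginv r + ginv (g (-x))) (deriv g x)⁻¹ p :=
    hginv_deriv.add_const _
  have hcomp : HasDerivAt (fun r : ℝ => g (ginv r + ginv (g (-x))))
      (deriv g (x + ginv (g (-x))) * (deriv g x)⁻¹) p := by
    have hg2 : HasDerivAt g (deriv g (x + ginv (g (-x)))) (ginv p + ginv (g (-x))) := by
      rw [← hx]; exact (hdiff _).hasDerivAt
    exact hg2.comp p hsum
  rw [hcomp.deriv]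
  rw [hq]
  have : x + -x = 0 := by ring
  rw [this]
  rw [gt_iff_lt, ← div_eq_mul_inv, lt_div_iff₀ (hpos x)]
  calc M * deriv g x < M * (deriv g 0 / M) := by
        exact mul_lt_mul_of_pos_left hdx hM
    _ = deriv g 0 := by field_simp
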